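/- There exists a unique formal power series f(u) ∈ 1 + u⁻²ℂ[[u⁻¹]] such that f(u) f(u+κ) = (1 - u⁻²)⁻¹, where κ is a fixed nonzero complex number and f(u+κ) is expanded in powers of u⁻¹. Moreover this f also satisfies f(u) f(-u) = (1 - u⁻²)⁻¹. -/

import Mathlib

open PowerSeries

/-- For a series `f(u) = ∑_{s≥0} f_s u^{-s} ∈ ℂ[[u⁻¹]]` (encoded as a power series in
`X = u⁻¹`), the series `f(u + c)` obtained by expanding
`(u+c)^{-s} = ∑_{k≥0} (-1)^k C(s+k-1, k) c^k u^{-s-k}` in powers of `u⁻¹`. -/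
noncomputable def shiftC (c : ℂ) (F : PowerSeries ℂ) : PowerSeries ℂ :=
  PowerSeries.mk fun r => ∑ s ∈ Finset.range (r + 1),
    ((-1 : ℂ)) ^ (r - s) * (Nat.choose (r - 1) (r - s) : ℂ) * c ^ (r - s) *
      PowerSeries.coeff s F

/-- For `f(u) ∈ ℂ[[u⁻¹]]`, the series `f(-u)` (encoded in `X = u⁻¹`). -/
noncomputable def negArg (F : PowerSeries ℂ) : PowerSeries ℂ :=
  PowerSeries.mk fun r => (-1 : ℂ) ^ r * PowerSeries.coeff r F

/-- The series `(1 - u⁻²)⁻¹ = ∑_{r≥0} u^{-2r}` (encoded in `X = u⁻¹`). -/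
noncomputable def geomEven : PowerSeries ℂ :=
  PowerSeries.mk fun r => if Even r then (1 : ℂ) else 0

open Finset

namespace MyAux

noncomputable def msub (G F : PowerSeries ℂ) : PowerSeries ℂ :=
  PowerSeries.mk fun n =>
    PowerSeries.coeff n (Polynomial.aeval G (PowerSeries.trunc (n+1) F))

lemma coeff_pow_zero {G : PowerSeries ℂ} (hG : constantCoeff G = 0)
    {n s : ℕ} (h : n < s) : coeff n (G ^ s) = 0 := by
  have hd : (X : PowerSeries ℂ) ^ s ∣ G ^ s :=
    pow_dvd_pow_of_dvd (PowerSeries.X_dvd_iff.mpr hG) s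
  exact (PowerSeries.X_pow_dvd_iff.mp hd) n h

lemma coeff_aeval_low {G : PowerSeries ℂ} (hG : constantCoeff G = 0)
    {n : ℕ} {P : Polynomial ℂ} (h : ∀ i ≤ n, P.coeff i = 0) :
    coeff n (Polynomial.aeval G P) = 0 := by
  rw [Polynomial.aeval_eq_sum_range, map_sum]
  refine Finset.sum_eq_zero fun i _ => ?_
  rcases le_or_gt i n with hi | hi
  · simp [h i hi]
  · rw [map_smul, coeff_pow_zero hG hi, smul_zero]

lemma coeff_aeval_congr {G : PowerSeries ℂ} (hG : constantCoeff G = 0)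
    {n : ℕ} {P Q : Polynomial ℂ} (h : ∀ i ≤ n, P.coeff i = Q.coeff i) :
    coeff n (Polynomial.aeval G P) = coeff n (Polynomial.aeval G Q) := by
  have h0 : coeff n (Polynomial.aeval G (P - Q)) = 0 :=
    coeff_aeval_low hG (fun i hi => by
      rw [Polynomial.coeff_sub, h i hi, sub_self])
  rw [map_sub, map_sub] at h0
  exact sub_eq_zero.mp h0

lemma coeff_msub_trunc {G : PowerSeries ℂ} (hG : constantCoeff G = 0)
    (F : PowerSeries ℂ) {n m : ℕ} (h : n < m) :
    coeff n (msub G F) = coeff n (Polynomial.aeval G (trunc m F)) := by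
  rw [msub, coeff_mk]
  refine coeff_aeval_congr hG fun i hi => ?_
  rw [coeff_trunc, coeff_trunc, if_pos (Nat.lt_succ_of_le hi), if_pos (lt_of_le_of_lt hi h)]

lemma msub_mul {G : PowerSeries ℂ} (hG : constantCoeff G = 0)
    (A B : PowerSeries ℂ) : msub G (A * B) = msub G A * msub G B := by
  ext n
  rw [msub, coeff_mk]
  have key : coeff n (Polynomial.aeval G (trunc (n+1) (A * B)))
      = coeff n (Polynomial.aeval G (trunc (n+1) A * trunc (n+1) B)) := by
    refine coeff_aeval_congr hG fun i hi => ?_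
    rw [coeff_trunc, if_pos (Nat.lt_succ_of_le hi), Polynomial.coeff_mul,
      PowerSeries.coeff_mul]
    refine Finset.sum_congr rfl fun p hp => ?_
    have h1 : p.1 < n + 1 := Nat.lt_succ_of_le
      (le_trans (Finset.HasAntidiagonal.antidiagonal.fst_le hp) hi)
    have h2 : p.2 < n + 1 := Nat.lt_succ_of_le
      (le_trans (Finset.HasAntidiagonal.antidiagonal.snd_le hp) hi)
    rw [coeff_trunc, coeff_trunc, if_pos h1, if_pos h2]
  rw [key, map_mul, PowerSeries.coeff_mul, PowerSeries.coeff_mul]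
  refine Finset.sum_congr rfl fun p hp => ?_
  have h1 : p.1 < n + 1 := Nat.lt_succ_of_le (Finset.HasAntidiagonal.antidiagonal.fst_le hp)
  have h2 : p.2 < n + 1 := Nat.lt_succ_of_le (Finset.HasAntidiagonal.antidiagonal.snd_le hp)
  rw [coeff_msub_trunc hG A h1, coeff_msub_trunc hG B h2]

lemma msub_one (G : PowerSeries ℂ) : msub G 1 = 1 := by
  ext n
  rw [msub, coeff_mk, trunc_one, map_one]

lemma msub_pow {G : PowerSeries ℂ} (hG : constantCoeff G = 0)
    (F : PowerSeries ℂ) (t : ℕ) : msub G (F ^ t) = (msub G F) ^ t := by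
  induction t with
  | zero => simpa using msub_one G
  | succ t ih => rw [pow_succ, pow_succ, msub_mul hG, ih]

lemma coeff_msub (G F : PowerSeries ℂ) (n : ℕ) :
    coeff n (msub G F) = ∑ s ∈ Finset.range (n+1), coeff s F * coeff n (G ^ s) := by
  rw [msub, coeff_mk,
    Polynomial.aeval_eq_sum_range' (natDegree_trunc_lt F n), map_sum]
  refine Finset.sum_congr rfl fun i hi => ?_
  rw [coeff_trunc, if_pos (Finset.mem_range.mp hi), map_smul, smul_eq_mul]

lemma msub_comp {G H : PowerSeries ℂ} (hG : constantCoeff G = 0)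
    (hH : constantCoeff H = 0) (F : PowerSeries ℂ) :
    msub G (msub H F) = msub (msub G H) F := by
  ext n
  rw [coeff_msub, coeff_msub]
  have hrhs : ∀ t, coeff n ((msub G H) ^ t)
      = ∑ s ∈ Finset.range (n+1), coeff s (H ^ t) * coeff n (G ^ s) := by
    intro t
    rw [← msub_pow hG, coeff_msub]
  calc ∑ s ∈ Finset.range (n+1), coeff s (msub H F) * coeff n (G ^ s)
      = ∑ s ∈ Finset.range (n+1), ∑ t ∈ Finset.range (n+1),
          coeff t F * coeff s (H ^ t) * coeff n (G ^ s) := by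
        refine Finset.sum_congr rfl fun s hs => ?_
        rw [coeff_msub, Finset.sum_mul]
        refine (Finset.sum_subset (Finset.range_subset_range.mpr
          (Nat.succ_le_succ (Nat.lt_succ_iff.mp (Finset.mem_range.mp hs))))
          fun t _ ht => ?_)
        have : s < t := by
          by_contra hc
          exact ht (Finset.mem_range.mpr (Nat.lt_succ_of_le (not_lt.mp hc)))
        rw [coeff_pow_zero hH this, mul_zero, zero_mul]
    _ = ∑ t ∈ Finset.range (n+1), coeff t F * coeff n ((msub G H) ^ t) := by
        rw [Finset.sum_comm]
        refine Finset.sum_congr rfl fun t _ => ?_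
        rw [hrhs t, Finset.mul_sum]
        refine Finset.sum_congr rfl fun s _ => by ring

lemma rescale_msub (a : ℂ) (G F : PowerSeries ℂ) :
    rescale a (msub G F) = msub (rescale a G) F := by
  ext n
  rw [coeff_rescale, coeff_msub, coeff_msub, Finset.mul_sum]
  refine Finset.sum_congr rfl fun s _ => ?_
  rw [← map_pow, coeff_rescale]
  ring







noncomputable def sig (c : ℂ) : PowerSeries ℂ :=
  X * rescale (-c) (PowerSeries.mk fun _ => (1 : ℂ))

lemma constantCoeff_sig (c : ℂ) : constantCoeff (sig c) = 0 := by
  rw [sig, map_mul, constantCoeff_X, zero_mul]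

lemma coeff_sig (c : ℂ) (s : ℕ) :
    coeff s (sig c) = if s = 0 then 0 else (-c) ^ (s - 1) := by
  rcases s with _ | s
  · simp [sig]
  · rw [sig, if_neg (Nat.succ_ne_zero s)]
    rw [← pow_one (X : PowerSeries ℂ), PowerSeries.coeff_X_pow_mul, coeff_rescale, coeff_mk]
    simp

lemma mkone_pow_coeff (s m : ℕ) (hs : 1 ≤ s) :
    coeff m ((PowerSeries.mk fun _ => (1 : ℂ)) ^ s)
      = (Nat.choose (s - 1 + m) (s - 1) : ℂ) := by
  have h1 : ((invOneSubPow ℂ s : (PowerSeries ℂ)ˣ) : PowerSeries ℂ)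
      = (PowerSeries.mk fun _ => (1 : ℂ)) ^ s := by
    rw [invOneSubPow_eq_inv_one_sub_pow]
    rw [inv_pow]
    rfl
  have h2 := invOneSubPow_val_eq_mk_sub_one_add_choose_of_pos ℂ (d := s) hs
  rw [h1] at h2
  rw [h2, coeff_mk]

lemma coeff_sig_pow (c : ℂ) {s n : ℕ} (h : s ≤ n) :
    coeff n (sig c ^ s)
      = (-1 : ℂ) ^ (n - s) * (Nat.choose (n - 1) (n - s) : ℂ) * c ^ (n - s) := by
  rcases Nat.eq_zero_or_pos s with rfl | hs
  · rcases Nat.eq_zero_or_pos n with rfl | hn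
    · simp
    · rw [pow_zero, PowerSeries.coeff_one, if_neg (Nat.pos_iff_ne_zero.mp hn),
        Nat.choose_eq_zero_of_lt (by omega : n - 1 < n - 0)]
      simp
  · rw [sig, mul_pow, ← map_pow]
    rw [PowerSeries.coeff_X_pow_mul' _ _ _]
    rw [if_pos h, coeff_rescale, mkone_pow_coeff s _ hs]
    have e1 : s - 1 + (n - s) = n - 1 := by omega
    have e2 : Nat.choose (n-1) (s-1) = Nat.choose (n-1) (n-s) := by
      have := Nat.choose_symm (n := n - 1) (k := n - s) (by omega)
      rw [← this]
      congr 1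
      omega
    rw [e1, e2, neg_pow]
    ring

lemma shiftC_eq_msub (c : ℂ) (F : PowerSeries ℂ) : shiftC c F = msub (sig c) F := by
  ext n
  rw [shiftC, coeff_mk, coeff_msub]
  refine Finset.sum_congr rfl fun s hs => ?_
  rw [coeff_sig_pow c (Nat.lt_succ_iff.mp (Finset.mem_range.mp hs))]
  ring

lemma negArg_eq_rescale (F : PowerSeries ℂ) : negArg F = rescale (-1) F := by
  ext n
  rw [negArg, coeff_mk, coeff_rescale]

lemma msub_negX (F : PowerSeries ℂ) : msub (-X) F = rescale (-1) F := by
  ext n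
  rw [coeff_msub, coeff_rescale]
  have hpow : ∀ s : ℕ, (-X : PowerSeries ℂ) ^ s = ((-1 : ℂ) ^ s) • (X ^ s : PowerSeries ℂ) := by
    intro s
    rw [← neg_one_smul ℂ (X : PowerSeries ℂ), smul_pow]
  have hsum : ∀ s ∈ Finset.range (n+1),
      coeff s F * coeff n ((-X : PowerSeries ℂ) ^ s)
        = if s = n then (-1 : ℂ) ^ n * coeff n F else 0 := by
    intro s _
    rw [hpow s, map_smul, smul_eq_mul, PowerSeries.coeff_X_pow]
    rcases eq_or_ne s n with rfl | hsn
    · rw [if_pos rfl, if_pos rfl]; ring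
    · rw [if_neg (Ne.symm hsn), if_neg hsn]; ring
  rw [Finset.sum_congr rfl hsum, Finset.sum_ite_eq' (Finset.range (n+1)) n
    (fun _ => (-1 : ℂ) ^ n * coeff n F), if_pos (Finset.self_mem_range_succ n)]

lemma sig_comp (c : ℂ) : msub (sig c) (rescale (-1) (sig c)) = -X := by
  ext n
  rw [coeff_msub]
  have hterm : ∀ s : ℕ, coeff s (rescale (-1) (sig c)) =
      if s = 0 then 0 else -c ^ (s - 1) := by
    intro s
    rw [coeff_rescale, coeff_sig]
    rcases s with _ | s
    · simp
    · rw [if_neg (Nat.succ_ne_zero s), if_neg (Nat.succ_ne_zero s), Nat.succ_sub_one]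
      have : ((-1 : ℂ)) ^ (s + 1) * (-c) ^ s = -c ^ s := by
        rw [neg_pow c, pow_succ]
        ring_nf
        rw [show s * 2 = 2 * s from mul_comm s 2, pow_mul]
        norm_num
      exact this
  rcases Nat.eq_zero_or_pos n with rfl | hn
  · rw [Finset.sum_range_one, hterm 0, if_pos rfl, zero_mul]
    simp
  · obtain ⟨m, rfl⟩ := Nat.exists_eq_add_of_le hn
    rw [Finset.sum_range_succ']
    have h0 : coeff 0 (rescale (-1) (sig c)) * coeff (1 + m) (sig c ^ 0) = 0 := by
      rw [hterm 0, if_pos rfl, zero_mul]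
    rw [h0, add_zero]
    have hstep : ∀ i ∈ Finset.range (1 + m),
        coeff (i+1) (rescale (-1) (sig c)) * coeff (1+m) (sig c ^ (i+1))
          = -c ^ m * ((-1 : ℂ) ^ (m - i) * (Nat.choose m (m - i) : ℂ)) := by
      intro i hi
      have hi' : i < 1 + m := Finset.mem_range.mp hi
      rw [hterm (i+1), if_neg (Nat.succ_ne_zero i), Nat.succ_sub_one]
      rw [coeff_sig_pow c (by omega : i + 1 ≤ 1 + m)]
      have e1 : 1 + m - (i+1) = m - i := by omega
      have e2 : 1 + m - 1 = m := by omega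
      rw [e1, e2]
      have e4 : c ^ i * c ^ (m - i) = c ^ m := by
        rw [← pow_add]; congr 1; omega
      calc -c ^ i * ((-1:ℂ) ^ (m-i) * (Nat.choose m (m-i) : ℂ) * c ^ (m-i))
          = -(c ^ i * c ^ (m-i)) * ((-1:ℂ) ^ (m-i) * (Nat.choose m (m-i) : ℂ)) := by ring
        _ = -c ^ m * ((-1:ℂ) ^ (m-i) * (Nat.choose m (m-i) : ℂ)) := by rw [e4]
    rw [Finset.sum_congr rfl hstep, ← Finset.mul_sum]
    have hrefl : ∑ i ∈ Finset.range (1 + m),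
        ((-1 : ℂ) ^ (m - i) * (Nat.choose m (m - i) : ℂ))
        = ∑ j ∈ Finset.range (m + 1), ((-1 : ℂ) ^ j * (Nat.choose m j : ℂ)) := by
      rw [add_comm 1 m]
      rw [← Finset.sum_range_reflect
        (fun j => ((-1 : ℂ) ^ j * (Nat.choose m j : ℂ))) (m + 1)]
      refine Finset.sum_congr rfl fun i hi => ?_
      have : i < m + 1 := Finset.mem_range.mp hi
      congr 2 <;> omega
    rw [hrefl]
    have halt : ∑ j ∈ Finset.range (m + 1), ((-1 : ℂ) ^ j * (Nat.choose m j : ℂ))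
        = if m = 0 then 1 else 0 := by
      have h := Int.alternating_sum_range_choose (n := m)
      have h2 := congrArg (fun z : ℤ => (z : ℂ)) h
      simp only [Int.cast_sum, Int.cast_mul, Int.cast_pow, Int.cast_neg, Int.cast_one,
        Int.cast_natCast, apply_ite, Int.cast_zero] at h2
      split_ifs at h2 ⊢ <;> assumption
    rw [halt]
    rcases Nat.eq_zero_or_pos m with rfl | hm
    · norm_num
    · rw [if_neg (Nat.pos_iff_ne_zero.mp hm), mul_zero]
      rw [map_neg, PowerSeries.coeff_X, if_neg (by omega : ¬ 1 + m = 1)]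
      simp

noncomputable def W (c : ℂ) (q s : ℕ) : ℂ :=
  (-1 : ℂ) ^ (q - s) * (Nat.choose (q - 1) (q - s) : ℂ) * c ^ (q - s)

lemma W_self (c : ℂ) (q : ℕ) : W c q q = 1 := by
  simp [W]

lemma W_one_zero (c : ℂ) : W c 1 0 = 0 := by
  simp [W]

noncomputable def Egg (c : ℂ) (g : ℕ → ℂ) (n : ℕ) : ℂ :=
  ∑ p ∈ Finset.range (n+1), g p * ∑ s ∈ Finset.range (n - p + 1), W c (n-p) s * g s

lemma coeff_mul_shiftC (c : ℂ) (F : PowerSeries ℂ) (n : ℕ) :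
    coeff n (F * shiftC c F) = Egg c (fun i => coeff i F) n := by
  rw [PowerSeries.coeff_mul, Finset.Nat.sum_antidiagonal_eq_sum_range_succ_mk, Egg]
  refine Finset.sum_congr rfl fun p _ => ?_
  rw [shiftC, coeff_mk]
  simp only [W]

noncomputable def Rst (c : ℂ) (g : ℕ → ℂ) (n : ℕ) : ℂ :=
  Egg c g n - g 0 * g n - g n * g 0

lemma Egg_eq_Rst (c : ℂ) (g : ℕ → ℂ) (n : ℕ) :
    Egg c g n = Rst c g n + g 0 * g n + g n * g 0 := by
  rw [Rst]; ring

lemma Rst_eq (c : ℂ) (g : ℕ → ℂ) (m : ℕ) :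
    Rst c g (m+1) = (∑ i ∈ Finset.range m, g (i+1) *
        ∑ s ∈ Finset.range (m - i + 1), W c (m - i) s * g s)
      + g 0 * ∑ s ∈ Finset.range (m+1), W c (m+1) s * g s := by
  rw [Rst, Egg, Finset.sum_range_succ, Finset.sum_range_succ']
  simp only [Nat.sub_self, Nat.succ_sub_succ_eq_sub, Nat.sub_zero, zero_add,
    Finset.sum_range_one]
  rw [W_self c 0, Finset.sum_range_succ, W_self c (m+1)]
  ring

lemma Rst_congr (c : ℂ) {g g' : ℕ → ℂ} {m : ℕ}
    (h : ∀ i < m + 1, g i = g' i) : Rst c g (m+1) = Rst c g' (m+1) := by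
  rw [Rst_eq, Rst_eq]
  have h0 : g 0 = g' 0 := h 0 (by omega)
  congr 1
  · refine Finset.sum_congr rfl fun i hi => ?_
    have hi' : i < m := Finset.mem_range.mp hi
    rw [h (i+1) (by omega)]
    congr 1
    refine Finset.sum_congr rfl fun s hs => ?_
    have hs' : s < m - i + 1 := Finset.mem_range.mp hs
    rw [h s (by omega)]
  · rw [h0]
    congr 1
    refine Finset.sum_congr rfl fun s hs => ?_
    have hs' : s < m + 1 := Finset.mem_range.mp hs
    rw [h s (by omega)]

lemma Rst_one (c : ℂ) (g : ℕ → ℂ) : Rst c g 1 = 0 := by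
  rw [Rst_eq]
  simp [Finset.sum_range_one, W_one_zero]

noncomputable def fc (c : ℂ) : ℕ → ℂ
  | 0 => 1
  | (n+1) =>
      ((if Even (n+1) then (1:ℂ) else 0)
        - Rst c (fun i => if h : i < n+1 then fc c i else 0) (n+1)) / 2
  termination_by n => n
  decreasing_by exact h

lemma fc_zero (c : ℂ) : fc c 0 = 1 := by rw [fc]

lemma fc_succ (c : ℂ) (n : ℕ) :
    fc c (n+1) = ((if Even (n+1) then (1:ℂ) else 0) - Rst c (fc c) (n+1)) / 2 := by
  rw [fc]
  congr 2
  exact Rst_congr c fun i hi => dif_pos hi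

lemma fc_one (c : ℂ) : fc c 1 = 0 := by
  rw [fc_succ, Rst_one]
  norm_num

lemma coeff_geomEven_zero : coeff 0 geomEven = 1 := by
  simp [geomEven]

lemma coeff_geomEven_one : coeff 1 geomEven = 0 := by
  simp [geomEven]

lemma rescale_geomEven : rescale (-1 : ℂ) geomEven = geomEven := by
  ext n
  rw [coeff_rescale, geomEven, coeff_mk]
  by_cases h : Even n <;> simp [h, Even.neg_one_pow]

lemma exist_part (c : ℂ) :
    coeff 0 (PowerSeries.mk (fc c)) = 1 ∧ coeff 1 (PowerSeries.mk (fc c)) = 0 ∧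
      PowerSeries.mk (fc c) * shiftC c (PowerSeries.mk (fc c)) = geomEven := by
  refine ⟨by rw [coeff_mk, fc_zero], by rw [coeff_mk, fc_one], ?_⟩
  ext n
  rw [coeff_mul_shiftC]
  have hfun : (fun i => coeff i (PowerSeries.mk (fc c))) = fc c := by
    funext i; rw [coeff_mk]
  rw [hfun, geomEven, coeff_mk]
  rcases n with _ | m
  · rw [Egg]
    simp [fc_zero, W_self]
  · rw [Egg_eq_Rst, fc_zero, fc_succ]
    ring

lemma uniq_part (c : ℂ) (F F' : PowerSeries ℂ)
    (h0 : coeff 0 F = 1) (h1 : coeff 1 F = 0)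
    (he : F * shiftC c F = geomEven)
    (h0' : coeff 0 F' = 1) (h1' : coeff 1 F' = 0)
    (he' : F' * shiftC c F' = geomEven) : F = F' := by
  ext n
  induction n using Nat.strong_induction_on with
  | _ n ih =>
    rcases n with _ | m
    · rw [h0, h0']
    · have e1 : coeff (m+1) (F * shiftC c F) = coeff (m+1) (F' * shiftC c F') := by
        rw [he, he']
      rw [coeff_mul_shiftC, coeff_mul_shiftC, Egg_eq_Rst, Egg_eq_Rst, h0, h0'] at e1
      rw [Rst_congr c (g := fun i => coeff i F) (g' := fun i => coeff i F')
        (fun i hi => ih i hi)] at e1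
      linear_combination e1 / 2

lemma constantCoeff_rescale (a : ℂ) (F : PowerSeries ℂ) :
    constantCoeff (rescale a F) = constantCoeff F := by
  rw [← coeff_zero_eq_constantCoeff_apply, ← coeff_zero_eq_constantCoeff_apply,
    coeff_rescale, pow_zero, one_mul]

lemma main2 (c : ℂ) (F : PowerSeries ℂ) (h0 : coeff 0 F = 1) (h1 : coeff 1 F = 0)
    (heq : F * shiftC c F = geomEven) : F * negArg F = geomEven := by
  have hσ : constantCoeff (sig c) = 0 := constantCoeff_sig c
  have hσ' : constantCoeff (rescale (-1) (sig c)) = 0 := by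
    rw [constantCoeff_rescale, hσ]
  have hcF : constantCoeff F = 1 := by
    rw [← coeff_zero_eq_constantCoeff_apply, h0]
  have hFi : F * F⁻¹ = 1 := PowerSeries.mul_inv_cancel F (by rw [hcF]; exact one_ne_zero)
  have heqm : F * msub (sig c) F = geomEven := by
    rw [← shiftC_eq_msub]; exact heq
  -- apply rescale (-1)
  have h2 : rescale (-1) F * msub (rescale (-1) (sig c)) F = geomEven := by
    have := congrArg (rescale (-1)) heqm
    rwa [map_mul, rescale_msub, rescale_geomEven] at this
  -- apply msub (sig c)
  have key : msub (sig c) (rescale (-1) F) * rescale (-1) F = msub (sig c) geomEven := by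
    have h3 := congrArg (msub (sig c)) h2
    rwa [msub_mul hσ, msub_comp hσ hσ', sig_comp, msub_negX] at h3
  have e1 : rescale (-1) F⁻¹ * rescale (-1) F = 1 := by
    rw [← map_mul, mul_comm, hFi, map_one]
  have e2 : msub (sig c) (rescale (-1) F⁻¹) * msub (sig c) (rescale (-1) F) = 1 := by
    rw [← msub_mul hσ, e1, msub_one]
  have hSg0 : constantCoeff (msub (sig c) geomEven) = 1 := by
    rw [← coeff_zero_eq_constantCoeff_apply, coeff_msub, Finset.sum_range_one, pow_zero,
      coeff_geomEven_zero]
    simp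
  have hSgne : msub (sig c) geomEven ≠ 0 := fun hz => by
    rw [hz, map_zero] at hSg0; exact one_ne_zero hSg0.symm
  -- the candidate G
  have hG0 : coeff 0 (geomEven * rescale (-1) F⁻¹) = 1 := by
    rw [coeff_zero_eq_constantCoeff_apply, map_mul, constantCoeff_rescale,
      PowerSeries.constantCoeff_inv, hcF, ← coeff_zero_eq_constantCoeff_apply,
      coeff_geomEven_zero]
    norm_num
  have hFi1 : coeff 1 F⁻¹ = 0 := by
    have := congrArg (coeff 1) hFi
    rw [PowerSeries.coeff_mul, Finset.Nat.sum_antidiagonal_eq_sum_range_succ_mk,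
      Finset.sum_range_succ, Finset.sum_range_one] at this
    simp only [Nat.sub_zero, Nat.sub_self] at this
    rw [h0, h1, PowerSeries.coeff_one] at this
    simpa using this
  have hG1 : coeff 1 (geomEven * rescale (-1) F⁻¹) = 0 := by
    rw [PowerSeries.coeff_mul, Finset.Nat.sum_antidiagonal_eq_sum_range_succ_mk,
      Finset.sum_range_succ, Finset.sum_range_one]
    simp only [Nat.sub_zero, Nat.sub_self]
    rw [coeff_geomEven_zero, coeff_geomEven_one, coeff_rescale, hFi1]
    ring
  have hGeq : (geomEven * rescale (-1) F⁻¹) * shiftC c (geomEven * rescale (-1) F⁻¹)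
      = geomEven := by
    rw [shiftC_eq_msub, msub_mul hσ]
    refine mul_right_cancel₀ hSgne ?_
    have expand : (geomEven * rescale (-1) F⁻¹) *
        (msub (sig c) geomEven * msub (sig c) (rescale (-1) F⁻¹)) *
        (msub (sig c) (rescale (-1) F) * rescale (-1) F)
        = geomEven * msub (sig c) geomEven := by
      calc (geomEven * rescale (-1) F⁻¹) *
          (msub (sig c) geomEven * msub (sig c) (rescale (-1) F⁻¹)) *
          (msub (sig c) (rescale (-1) F) * rescale (-1) F)
          = (geomEven * msub (sig c) geomEven) *
            ((rescale (-1) F⁻¹ * rescale (-1) F) *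
              (msub (sig c) (rescale (-1) F⁻¹) * msub (sig c) (rescale (-1) F))) := by
            ring
        _ = geomEven * msub (sig c) geomEven := by
            rw [e1, e2, mul_one, mul_one]
    rwa [key] at expand
  -- uniqueness
  have hFG : F = geomEven * rescale (-1) F⁻¹ :=
    uniq_part c F _ h0 h1 heq hG0 hG1 hGeq
  have hmul := congrArg (fun Z => Z * rescale (-1) F) hFG
  rw [negArg_eq_rescale, hmul, mul_assoc, e1, mul_one]

end MyAux

/-- There is a unique `f(u) ∈ 1 + u⁻²ℂ[[u⁻¹]]` with `f(u)f(u+κ) = (1-u⁻²)⁻¹`, and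
moreover any such `f` also satisfies `f(u)f(-u) = (1-u⁻²)⁻¹`. -/
theorem statement10 (κ : ℂ) (hκ : κ ≠ 0) :
    (∃! F : PowerSeries ℂ,
      PowerSeries.coeff 0 F = 1 ∧ PowerSeries.coeff 1 F = 0 ∧
        F * shiftC κ F = geomEven) ∧
    (∀ F : PowerSeries ℂ,
      PowerSeries.coeff 0 F = 1 → PowerSeries.coeff 1 F = 0 →
        F * shiftC κ F = geomEven → F * negArg F = geomEven) := by
  constructor
  · refine ⟨PowerSeries.mk (MyAux.fc κ), MyAux.exist_part κ, ?_⟩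
    rintro F ⟨h0, h1, he⟩
    obtain ⟨g0, g1, ge⟩ := MyAux.exist_part κ
    exact MyAux.uniq_part κ F _ h0 h1 he g0 g1 ge
  · intro F h0 h1 he
    exact MyAux.main2 κ F h0 h1 he
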